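/- For every u ∈ H one has max_{k ∈ {1,...,T}} |u(k)| ≤ (1/κ) · (Σ_{k=1}^{T+1} |u(k) - u(k-1)|^p)^{1/p}. -/

import Mathlib

open Real Finset

private lemma convexOn_rpow_neg {q : ℝ} (hq : q < 0) :
    ConvexOn ℝ (Set.Ioi (0:ℝ)) fun x : ℝ => x ^ q := by
  have hd : ∀ x ∈ Set.Ioi (0:ℝ), HasDerivAt (fun x : ℝ => x ^ q) (q * x ^ (q - 1)) x :=
    fun x hx => Real.hasDerivAt_rpow_const (Or.inl (ne_of_gt hx))
  have hderiv : ∀ x ∈ Set.Ioi (0:ℝ), deriv (fun x : ℝ => x ^ q) x = q * x ^ (q - 1) :=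
    fun x hx => (hd x hx).deriv
  apply convexOn_of_deriv2_nonneg (convex_Ioi 0)
  · exact fun x hx => ((hd x hx).continuousAt).continuousWithinAt
  · rw [interior_Ioi]
    exact fun x hx => ((hd x hx).differentiableAt).differentiableWithinAt
  · rw [interior_Ioi]
    have hg : DifferentiableOn ℝ (fun x : ℝ => q * x ^ (q - 1)) (Set.Ioi 0) := fun x hx =>
      (((Real.hasDerivAt_rpow_const (p := q - 1)
        (Or.inl (ne_of_gt hx))).differentiableAt).const_mul q).differentiableWithinAt
    exact hg.congr hderiv
  · rw [interior_Ioi]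
    intro x hx
    have hev : deriv (fun x : ℝ => x ^ q) =ᶠ[nhds x] fun x : ℝ => q * x ^ (q - 1) := by
      filter_upwards [isOpen_Ioi.mem_nhds hx] with y hy using hderiv y hy
    have : deriv^[2] (fun x : ℝ => x ^ q) x
        = deriv (fun x : ℝ => q * x ^ (q - 1)) x := by
      simp only [Function.iterate_succ, Function.iterate_zero, Function.comp_apply, id]
      exact hev.deriv_eq
    rw [this]
    have : HasDerivAt (fun x : ℝ => q * x ^ (q - 1)) (q * ((q - 1) * x ^ (q - 1 - 1))) x :=
      (Real.hasDerivAt_rpow_const (p := q - 1) (Or.inl (ne_of_gt hx))).const_mul q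
    rw [this.deriv]
    have h1 : q * (q - 1) ≥ 0 := by nlinarith
    have h2 : (0:ℝ) < x ^ (q - 1 - 1) := Real.rpow_pos_of_pos hx _
    nlinarith

private lemma two_point {q : ℝ} (hq : q < 0) {x y s t : ℝ} (hx : 0 < x)
    (hxs : x ≤ s) (hst : s ≤ t) (hty : t ≤ y) (hsum : x + y = s + t) :
    s ^ q + t ^ q ≤ x ^ q + y ^ q := by
  rcases eq_or_lt_of_le (hxs.trans (hst.trans hty)) with h | hxy
  · have hs : s = x := le_antisymm (by linarith) hxs
    have ht : t = y := by linarith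
    rw [hs, ht]
  · have hy : 0 < y := hx.trans hxy
    have hd : 0 < y - x := by linarith
    set a := (y - s) / (y - x) with ha_def
    have ha : 0 ≤ a := div_nonneg (by linarith) hd.le
    have hb : 0 ≤ 1 - a := by
      have : a ≤ 1 := (div_le_one hd).2 (by linarith)
      linarith
    have hab : a + (1 - a) = 1 := by ring
    have C := convexOn_rpow_neg hq
    have h1 := C.2 (Set.mem_Ioi.2 hx) (Set.mem_Ioi.2 hy) ha hb hab
    have h2 := C.2 (Set.mem_Ioi.2 hx) (Set.mem_Ioi.2 hy) hb ha (by ring)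
    have e1 : a * x + (1 - a) * y = s := by rw [ha_def]; linear_combination -(div_mul_cancel₀ (y - s) hd.ne')
    have e2 : (1 - a) * x + a * y = t := by
      have : (1 - a) * x + a * y = x + y - (a * x + (1 - a) * y) := by ring
      rw [this, e1]; linarith
    simp only [smul_eq_mul] at h1 h2
    rw [e1] at h1; rw [e2] at h2
    nlinarith [h1, h2]

private lemma holder_sum (p : ℝ) (hp : 1 < p) (s : Finset ℕ) (f : ℕ → ℝ) :
    |∑ j ∈ s, f j| ≤ (s.card : ℝ) ^ ((p - 1) / p) * (∑ j ∈ s, |f j| ^ p) ^ (1 / p) := by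
  have hpq : p.HolderConjugate (p / (p - 1)) := Real.HolderConjugate.conjExponent hp
  have h0 : |∑ j ∈ s, f j| ≤ ∑ j ∈ s, |f j| := Finset.abs_sum_le_sum_abs _ _
  have h1 := Real.inner_le_Lp_mul_Lq s (fun j => |f j|) (fun _ => (1:ℝ)) hpq
  simp only [mul_one, abs_abs, abs_one, Real.one_rpow, Finset.sum_const, nsmul_eq_mul] at h1
  have hq : 1 / (p / (p - 1)) = (p - 1) / p := by
    rw [one_div_div]
  rw [hq] at h1
  calc |∑ j ∈ s, f j| ≤ ∑ j ∈ s, |f j| := h0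
    _ ≤ (∑ j ∈ s, |f j| ^ p) ^ (1 / p) * ((s.card : ℝ) * 1) ^ ((p - 1) / p) := by
        simpa using h1
    _ = (s.card : ℝ) ^ ((p - 1) / p) * (∑ j ∈ s, |f j| ^ p) ^ (1 / p) := by
        rw [mul_one, mul_comm]

private lemma tele (u : ℕ → ℝ) (a : ℕ) : ∀ b : ℕ, a ≤ b →
    ∑ j ∈ Finset.Ioc a b, (u j - u (j - 1)) = u b - u a := by
  intro b hb
  induction b, hb using Nat.le_induction with
  | base => simp
  | succ b hab ih =>
    rw [Finset.sum_Ioc_succ_top (by omega), ih]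
    simp

private lemma kappa_pos (T : ℕ) (hT : 2 ≤ T) (p : ℝ) (hp : 1 < p) :
    0 < (if Even T then ((2 / (T : ℝ)) ^ (p - 1) + (2 / ((T : ℝ) + 2)) ^ (p - 1)) ^ (1 / p)
      else 2 / ((T : ℝ) + 1) ^ ((p - 1) / p)) := by
  have hT0 : (0:ℝ) < T := by exact_mod_cast Nat.lt_of_lt_of_le Nat.zero_lt_two hT
  split
  · have h1 : (0:ℝ) < (2 / (T : ℝ)) ^ (p - 1) := Real.rpow_pos_of_pos (by positivity) _
    have h2 : (0:ℝ) < (2 / ((T : ℝ) + 2)) ^ (p - 1) := Real.rpow_pos_of_pos (by positivity) _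
    exact Real.rpow_pos_of_pos (by linarith) _
  · have : (0:ℝ) < ((T : ℝ) + 1) ^ ((p - 1) / p) := Real.rpow_pos_of_pos (by linarith) _
    positivity

private lemma kappa_le (T k : ℕ) (hT : 2 ≤ T) (p : ℝ) (hp : 1 < p)
    (hk1 : 1 ≤ k) (hkT : k ≤ T) :
    (if Even T then ((2 / (T : ℝ)) ^ (p - 1) + (2 / ((T : ℝ) + 2)) ^ (p - 1)) ^ (1 / p)
      else 2 / ((T : ℝ) + 1) ^ ((p - 1) / p)) ^ p
      ≤ (k : ℝ) ^ (1 - p) + ((T : ℝ) + 1 - k) ^ (1 - p) := by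
  have hq : (1 : ℝ) - p < 0 := by linarith
  have hp0 : (0:ℝ) < p := by linarith
  have hk0 : (0:ℝ) < k := by exact_mod_cast hk1
  have hkTr : (k:ℝ) ≤ T := by exact_mod_cast hkT
  have hm0 : (0:ℝ) < (T:ℝ) + 1 - k := by linarith
  split
  case isTrue h =>
    obtain ⟨n, hn⟩ := h
    have hn1 : 1 ≤ n := by omega
    have hn0 : (0:ℝ) < n := by exact_mod_cast hn1
    have hTr : (T:ℝ) = 2 * n := by rw [hn]; push_cast; ring
    have e1 : (2 / (T:ℝ)) ^ (p - 1) = (n:ℝ) ^ (1 - p) := by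
      rw [hTr, show (2:ℝ) / (2 * n) = ((n:ℝ)) ⁻¹ by field_simp,
        Real.inv_rpow hn0.le, ← Real.rpow_neg hn0.le]
      ring_nf
    have e2 : (2 / ((T:ℝ) + 2)) ^ (p - 1) = ((n:ℝ) + 1) ^ (1 - p) := by
      rw [hTr, show (2:ℝ) / (2 * n + 2) = ((n:ℝ) + 1) ⁻¹ by field_simp,
        Real.inv_rpow (by positivity), ← Real.rpow_neg (by positivity)]
      ring_nf
    rw [e1, e2, one_div, Real.rpow_inv_rpow (by positivity) hp0.ne']
    rcases le_or_gt k n with hkn | hkn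
    · have hkn' : (k:ℝ) ≤ n := by exact_mod_cast hkn
      exact two_point hq hk0 hkn' (by linarith) (by linarith) (by linarith)
    · have hkn' : (n:ℝ) + 1 ≤ k := by exact_mod_cast hkn
      have := two_point hq hm0 (by linarith) (by linarith) (by linarith)
        (by linarith : ((T:ℝ) + 1 - k) + k = n + (n + 1))
      linarith
  case isFalse h =>
    obtain ⟨n, hn⟩ := Nat.not_even_iff_odd.mp h
    have hn1 : 1 ≤ n := by omega
    have hn0 : (0:ℝ) < (n:ℝ) + 1 := by positivity
    have hTr : (T:ℝ) + 1 = 2 * ((n:ℝ) + 1) := by rw [hn]; push_cast; ring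
    have hB : (0:ℝ) < ((T : ℝ) + 1) ^ ((p - 1) / p) := Real.rpow_pos_of_pos (by linarith) _
    have key : (2 / ((T : ℝ) + 1) ^ ((p - 1) / p)) ^ p
        = ((n:ℝ) + 1) ^ (1 - p) + ((n:ℝ) + 1) ^ (1 - p) := by
      rw [Real.div_rpow (by norm_num) hB.le, ← Real.rpow_mul (by linarith : (0:ℝ) ≤ (T:ℝ) + 1),
        div_mul_cancel₀ _ hp0.ne', hTr, Real.mul_rpow (by norm_num) hn0.le]
      have h2 : (2:ℝ) ^ p = 2 * 2 ^ (p - 1) := by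
        rw [← Real.rpow_one_add' (by norm_num) (by linarith)]
        ring_nf
      have h3 : ((n:ℝ) + 1) ^ (1 - p) = (((n:ℝ) + 1) ^ (p - 1))⁻¹ := by
        rw [← Real.rpow_neg hn0.le]; ring_nf
      have hX : (0:ℝ) < ((n:ℝ) + 1) ^ (p - 1) := Real.rpow_pos_of_pos hn0 _
      have h2X : (0:ℝ) < (2:ℝ) ^ (p - 1) := Real.rpow_pos_of_pos (by norm_num) _
      rw [h2, h3]
      field_simp
      ring
    rw [key]
    rcases le_or_gt k (n + 1) with hkn | hkn
    · have hkn' : (k:ℝ) ≤ n + 1 := by exact_mod_cast hkn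
      exact two_point hq hk0 hkn' le_rfl (by linarith) (by linarith)
    · have hkn' : (n:ℝ) + 1 ≤ k := by exact_mod_cast hkn.le
      have := two_point hq hm0 (by linarith) le_rfl (by linarith)
        (by linarith : ((T:ℝ) + 1 - k) + k = (n + 1) + (n + 1))
      linarith

private lemma pow_step {p : ℝ} (hp : 1 < p) {A c S1 : ℝ} (hA : 0 ≤ A) (hc : 0 < c)
    (hS1 : 0 ≤ S1) (h : A ≤ c ^ ((p - 1) / p) * S1 ^ (1 / p)) :
    c ^ (1 - p) * A ^ p ≤ S1 := by
  have hp0 : (0:ℝ) < p := by linarith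
  have h' := Real.rpow_le_rpow hA h hp0.le
  rw [Real.mul_rpow (by positivity) (by positivity), ← Real.rpow_mul hc.le,
    div_mul_cancel₀ _ hp0.ne', one_div, Real.rpow_inv_rpow hS1 hp0.ne'] at h'
  calc c ^ (1 - p) * A ^ p ≤ c ^ (1 - p) * (c ^ (p - 1) * S1) :=
        mul_le_mul_of_nonneg_left h' (Real.rpow_nonneg hc.le _)
    _ = S1 := by
        rw [← mul_assoc, ← Real.rpow_add hc]
        norm_num

/-- inequality (2), [cit, Lemma 4].  For every `u ∈ H` one has
`max_{k ∈ ℤ[1,T]} |u k| ≤ (1/κ) · (∑_{k=1}^{T+1} |Δu(k-1)|^p)^{1/p}`. -/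
theorem discrete_sup_norm_le
    (T : ℕ) (hT : 2 ≤ T) (p : ℝ) (hp : 1 < p)
    (κ : ℝ)
    (hκ : κ = if Even T
      then ((2 / (T : ℝ)) ^ (p - 1) + (2 / ((T : ℝ) + 2)) ^ (p - 1)) ^ (1 / p)
      else 2 / ((T : ℝ) + 1) ^ ((p - 1) / p))
    (u : ℕ → ℝ) (h0 : u 0 = 0) (hT1 : u (T + 1) = 0) :
    ∀ k ∈ Finset.Icc 1 T,
      |u k| ≤ (1 / κ) * (∑ j ∈ Finset.Icc 1 (T + 1), |u j - u (j - 1)| ^ p) ^ (1 / p) := by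
  intro k hk
  rw [Finset.mem_Icc] at hk
  obtain ⟨hk1, hkT⟩ := hk
  have hp0 : (0:ℝ) < p := by linarith
  have hkT1 : k ≤ T + 1 := by omega
  have hIcc : Finset.Icc 1 (T + 1) = Finset.Ioc 0 (T + 1) := by
    ext x; simp only [Finset.mem_Icc, Finset.mem_Ioc]; omega
  rw [hIcc]
  set S := ∑ j ∈ Finset.Ioc 0 (T + 1), |u j - u (j - 1)| ^ p with hS_def
  set S1 := ∑ j ∈ Finset.Ioc 0 k, |u j - u (j - 1)| ^ p with hS1_def
  set S2 := ∑ j ∈ Finset.Ioc k (T + 1), |u j - u (j - 1)| ^ p with hS2_def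
  have hsplit : S1 + S2 = S :=
    Finset.sum_Ioc_consecutive _ (Nat.zero_le k) hkT1
  have hS1 : 0 ≤ S1 := Finset.sum_nonneg fun j _ => Real.rpow_nonneg (abs_nonneg _) _
  have hS2 : 0 ≤ S2 := Finset.sum_nonneg fun j _ => Real.rpow_nonneg (abs_nonneg _) _
  have hS : 0 ≤ S := by rw [← hsplit]; linarith
  -- Hölder on the two pieces
  have h1 : |u k| ≤ (k : ℝ) ^ ((p - 1) / p) * S1 ^ (1 / p) := by
    have h := holder_sum p hp (Finset.Ioc 0 k) (fun j => u j - u (j - 1))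
    rw [tele u 0 k (Nat.zero_le k), h0, sub_zero, Nat.card_Ioc] at h
    simpa using h
  have h2 : |u k| ≤ ((T : ℝ) + 1 - k) ^ ((p - 1) / p) * S2 ^ (1 / p) := by
    have h := holder_sum p hp (Finset.Ioc k (T + 1)) (fun j => u j - u (j - 1))
    rw [tele u k (T + 1) (by omega), hT1, zero_sub, abs_neg, Nat.card_Ioc] at h
    have hc : ((T + 1 - k : ℕ) : ℝ) = (T : ℝ) + 1 - k := by
      push_cast [Nat.cast_sub hkT1]; ring
    rwa [hc] at h
  have hk0 : (0:ℝ) < k := by exact_mod_cast hk1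
  have hkTr : (k:ℝ) ≤ T := by exact_mod_cast hkT
  have hm0 : (0:ℝ) < (T:ℝ) + 1 - k := by linarith
  have hA1 : (k : ℝ) ^ (1 - p) * |u k| ^ p ≤ S1 :=
    pow_step hp (abs_nonneg _) hk0 hS1 h1
  have hA2 : ((T : ℝ) + 1 - k) ^ (1 - p) * |u k| ^ p ≤ S2 :=
    pow_step hp (abs_nonneg _) hm0 hS2 h2
  have hκpos : 0 < κ := by rw [hκ]; exact kappa_pos T hT p hp
  have hκle : κ ^ p ≤ (k : ℝ) ^ (1 - p) + ((T : ℝ) + 1 - k) ^ (1 - p) := by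
    rw [hκ]; exact kappa_le T k hT p hp hk1 hkT
  have hup : 0 ≤ |u k| ^ p := Real.rpow_nonneg (abs_nonneg _) _
  have hfin : (κ * |u k|) ^ p ≤ S := by
    rw [Real.mul_rpow hκpos.le (abs_nonneg _)]
    calc κ ^ p * |u k| ^ p
        ≤ ((k : ℝ) ^ (1 - p) + ((T : ℝ) + 1 - k) ^ (1 - p)) * |u k| ^ p :=
          mul_le_mul_of_nonneg_right hκle hup
      _ = (k : ℝ) ^ (1 - p) * |u k| ^ p + ((T : ℝ) + 1 - k) ^ (1 - p) * |u k| ^ p := by ring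
      _ ≤ S1 + S2 := add_le_add hA1 hA2
      _ = S := hsplit
  have h5 : κ * |u k| ≤ S ^ (1 / p) := by
    calc κ * |u k| = ((κ * |u k|) ^ p) ^ (1 / p) := by
          rw [one_div, Real.rpow_rpow_inv (by positivity) hp0.ne']
      _ ≤ S ^ (1 / p) := Real.rpow_le_rpow (by positivity) hfin (by positivity)
  calc |u k| = (κ * |u k|) / κ := by field_simp
    _ ≤ S ^ (1 / p) / κ := (div_le_div_iff_of_pos_right hκpos).mpr h5
    _ = (1 / κ) * S ^ (1 / p) := by ring
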